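/- Define lg x := ⌈log₂(x+1)⌉ (the ceiling taken as a natural number). For all real numbers ρ and β with 0 ≤ ρ < 1 and β ≥ 0, there exists a natural number N such that for every natural number n ≥ N, setting L := (9·n³·(lg n)² + β)/(1−ρ) (a real number), the inequality L − 9·n³·(lg L) ≥ ρ·L + β holds. -/

import Mathlib

/-- `lg x = ⌈log₂(x+1)⌉` as a natural number. -/
noncomputable def lg (x : ℝ) : ℕ := ⌈Real.logb 2 (x + 1)⌉₊

/-- For `0 ≤ ρ < 1` and `β ≥ 0`, for all sufficiently large `n`, the window size
`L = (9n³·(lg n)² + β)/(1−ρ)` satisfies `L − 9n³·lg L ≥ ρL + β`. -/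
theorem adjust_window_size_sufficient (ρ β : ℝ) (hρ0 : 0 ≤ ρ) (hρ1 : ρ < 1)
    (hβ : 0 ≤ β) :
    ∃ N : ℕ, ∀ n : ℕ, N ≤ n →
      (9 * (n : ℝ) ^ 3 * ((lg (n : ℝ) : ℝ)) ^ 2 + β) / (1 - ρ)
          - 9 * (n : ℝ) ^ 3 *
            ((lg ((9 * (n : ℝ) ^ 3 * ((lg (n : ℝ) : ℝ)) ^ 2 + β) / (1 - ρ)) : ℝ))
        ≥ ρ * ((9 * (n : ℝ) ^ 3 * ((lg (n : ℝ) : ℝ)) ^ 2 + β) / (1 - ρ)) + β := by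
  have h1ρ : (0:ℝ) < 1 - ρ := by linarith
  obtain ⟨m, hm⟩ := pow_unbounded_of_one_lt (max (1/(1-ρ)) β) (by norm_num : (1:ℝ) < 2)
  have hC : 1/(1-ρ) ≤ 2^m := le_trans (le_max_left _ _) hm.le
  have hB : β ≤ 2^m := le_trans (le_max_right _ _) hm.le
  refine ⟨2^(2*m+11), fun n hn => ?_⟩
  set k := lg (n:ℝ) with hk
  -- basic facts
  have hn1 : (0:ℝ) < (n:ℝ) + 1 := by positivity
  have hkceil : Real.logb 2 ((n:ℝ) + 1) ≤ (k:ℝ) := Nat.le_ceil _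
  have hn2k : (n:ℝ) + 1 ≤ 2^k := by
    have h1 : ((n:ℝ)+1) = (2:ℝ) ^ Real.logb 2 ((n:ℝ)+1) :=
      (Real.rpow_logb (by norm_num) (by norm_num) hn1).symm
    calc (n:ℝ)+1 = (2:ℝ) ^ Real.logb 2 ((n:ℝ)+1) := h1
      _ ≤ (2:ℝ) ^ ((k:ℝ)) := Real.rpow_le_rpow_of_exponent_le one_le_two hkceil
      _ = (2:ℝ) ^ k := by rw [Real.rpow_natCast]
  have hkge : 2*m+11 ≤ k := by
    have h2 : ((2:ℝ)^(2*m+11) : ℝ) ≤ (n:ℝ) := by exact_mod_cast hn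
    have h3 : ((2*m+11 : ℕ) : ℝ) ≤ Real.logb 2 ((n:ℝ)+1) := by
      have := Real.logb_le_logb_of_le (b := 2) (by norm_num) (by positivity) (by linarith : ((2:ℝ)^(2*m+11)) ≤ (n:ℝ)+1)
      calc ((2*m+11 : ℕ):ℝ) = Real.logb 2 ((2:ℝ)^(2*m+11)) := by
            rw [Real.logb_pow, Real.logb_self_eq_one (by norm_num)]; ring
        _ ≤ Real.logb 2 ((n:ℝ)+1) := this
    have : ((2*m+11 : ℕ) : ℝ) ≤ (k:ℝ) := le_trans h3 hkceil
    exact_mod_cast this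
  have hk1 : 1 ≤ k := le_trans (by omega) hkge
  set L : ℝ := (9 * (n : ℝ) ^ 3 * ((k : ℝ)) ^ 2 + β) / (1 - ρ) with hL
  have hnum : (0:ℝ) ≤ 9 * (n : ℝ) ^ 3 * ((k : ℝ)) ^ 2 + β := by positivity
  have hL0 : 0 ≤ L := div_nonneg hnum h1ρ.le
  -- bound L + 1 ≤ 2^(k^2)
  have hnle : (n:ℝ) ≤ 2^k := by linarith
  have hkle : (k:ℝ) ≤ 2^k := by exact_mod_cast (Nat.lt_two_pow_self (n := k)).le
  have hLle : L + 1 ≤ (2:ℝ)^(5*k+2*m+6) := by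
    have h4 : L ≤ (9 * (n : ℝ) ^ 3 * ((k : ℝ)) ^ 2 + β) * 2^m := by
      rw [hL, div_eq_mul_inv]
      have : (1-ρ)⁻¹ ≤ (2:ℝ)^m := by rwa [one_div] at hC
      exact mul_le_mul_of_nonneg_left this hnum
    have h5 : 9 * (n : ℝ) ^ 3 * ((k : ℝ)) ^ 2 + β ≤ (2:ℝ)^(5*k+m+5) := by
      have hn3 : (n:ℝ)^3 ≤ ((2:ℝ)^k)^3 := by
        apply pow_le_pow_left₀ (by positivity) hnle
      have hk2 : ((k:ℝ))^2 ≤ ((2:ℝ)^k)^2 := by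
        apply pow_le_pow_left₀ (by positivity) hkle
      have h6 : 9 * (n : ℝ) ^ 3 * ((k : ℝ)) ^ 2 ≤ 9 * (2:ℝ)^(5*k) := by
        calc 9 * (n : ℝ) ^ 3 * ((k : ℝ)) ^ 2 ≤ 9 * ((2:ℝ)^k)^3 * ((2:ℝ)^k)^2 := by
              apply mul_le_mul (mul_le_mul_of_nonneg_left hn3 (by norm_num)) hk2 (by positivity) (by positivity)
          _ = 9 * (2:ℝ)^(5*k) := by rw [← pow_mul, ← pow_mul, show 5*k = k*3+k*2 by ring, pow_add]; ring
      have h7 : (2:ℝ)^m ≤ (2:ℝ)^(5*k+m) := by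
        apply pow_le_pow_right₀ one_le_two; omega
      have h8 : (9:ℝ) * (2:ℝ)^(5*k) + (2:ℝ)^(5*k+m) ≤ (2:ℝ)^(5*k+m+5) := by
        have : (2:ℝ)^(5*k+m+5) = 32 * ((2:ℝ)^(5*k) * (2:ℝ)^m) := by
          rw [pow_add, pow_add]; ring
        have h9 : (1:ℝ) ≤ (2:ℝ)^m := one_le_pow₀ one_le_two
        have h10 : (2:ℝ)^(5*k+m) = (2:ℝ)^(5*k) * (2:ℝ)^m := by rw [pow_add]
        have h11 : (0:ℝ) < (2:ℝ)^(5*k) := by positivity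
        nlinarith
      linarith
    have h12 : L ≤ (2:ℝ)^(5*k+m+5) * 2^m := le_trans h4 (mul_le_mul_of_nonneg_right h5 (by positivity))
    have h13 : (2:ℝ)^(5*k+m+5) * 2^m = (2:ℝ)^(5*k+2*m+5) := by
      rw [← pow_add]; congr 1; ring
    have h14 : (1:ℝ) ≤ (2:ℝ)^(5*k+2*m+5) := one_le_pow₀ one_le_two
    have h15 : (2:ℝ)^(5*k+2*m+6) = 2 * (2:ℝ)^(5*k+2*m+5) := by
      rw [pow_succ]; ring
    rw [h13] at h12
    linarith
  have hexp : 5*k+2*m+6 ≤ k^2 := by nlinarith [hkge, hk1]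
  have hLle2 : L + 1 ≤ (2:ℝ)^(k^2) := le_trans hLle (pow_le_pow_right₀ one_le_two hexp)
  -- conclude lg L ≤ k^2
  have hlgL : lg L ≤ k^2 := by
    rw [lg, Nat.ceil_le]
    have hL1 : (0:ℝ) < L + 1 := by linarith
    calc Real.logb 2 (L+1) ≤ Real.logb 2 ((2:ℝ)^(k^2)) := Real.logb_le_logb_of_le (by norm_num) hL1 hLle2
      _ = (k^2 : ℕ) := by
          rw [Real.logb_pow, Real.logb_self_eq_one (by norm_num)]
          push_cast; ring
  -- final arithmetic
  have hkey : (1-ρ) * L = 9 * (n : ℝ) ^ 3 * ((k : ℝ)) ^ 2 + β := by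
    rw [hL]; field_simp
  have hlgLR : (lg L : ℝ) ≤ ((k:ℝ))^2 := by exact_mod_cast hlgL
  have hmul : 9 * (n : ℝ) ^ 3 * (lg L : ℝ) ≤ 9 * (n : ℝ) ^ 3 * ((k:ℝ))^2 :=
    mul_le_mul_of_nonneg_left hlgLR (by positivity)
  show L - 9 * (n : ℝ) ^ 3 * (lg L : ℝ) ≥ ρ * L + β
  nlinarith [hmul, hkey]
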